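/- For a symmetric bilinear form B on an n-dimensional inner product space with eigenvalues λ₁,…,λ_n, the quantity (1/(k!(n−k)!))·⋆(g^{n−k}·B^k) equals the k-th elementary symmetric function e_k(λ₁,…,λ_n). -/

import Mathlib

open scoped BigOperators RealInnerProductSpace

/-- A `(p,q)`-double form on `V` (function version). -/
abbrev DForm (V : Type*) (p q : ℕ) : Type _ := (Fin p → V) → (Fin q → V) → ℝ

/-- Wedge product of (alternating) `p`-forms, determinant convention. -/
noncomputable def wedgeF {V : Type*} {p q : ℕ} (α : (Fin p → V) → ℝ) (β : (Fin q → V) → ℝ) :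
    (Fin (p + q) → V) → ℝ := fun x =>
  (1 / (p.factorial * q.factorial : ℝ)) *
    ∑ σ : Equiv.Perm (Fin (p + q)),
      ((Equiv.Perm.sign σ : ℤ) : ℝ) *
        (α fun i => x (σ (Fin.castAdd q i))) * (β fun j => x (σ (Fin.natAdd p j)))

/-- Exterior (Kulkarni–Nomizu type) product of double forms. -/
noncomputable def dmul {V : Type*} {p q r s : ℕ} (ω : DForm V p q) (η : DForm V r s) :
    DForm V (p + r) (q + s) := fun x y =>
  (1 / (p.factorial * r.factorial * q.factorial * s.factorial : ℝ)) *
    ∑ σ : Equiv.Perm (Fin (p + r)), ∑ τ : Equiv.Perm (Fin (q + s)),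
      ((Equiv.Perm.sign σ : ℤ) : ℝ) * ((Equiv.Perm.sign τ : ℤ) : ℝ) *
        ω (fun i => x (σ (Fin.castAdd r i))) (fun j => y (τ (Fin.castAdd s j))) *
        η (fun i => x (σ (Fin.natAdd p i))) (fun j => y (τ (Fin.natAdd q j)))

/-- Reindexing a double form along equalities of the bidegree. -/
def castD {V : Type*} {p q p' q' : ℕ} (hp : p = p') (hq : q = q') (ω : DForm V p q) :
    DForm V p' q' := fun x y => ω (fun i => x (Fin.cast hp i)) (fun j => y (Fin.cast hq j))

/-- Tensor product of two forms, as a double form. -/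
def tmulD {V : Type*} {p q : ℕ} (α : (Fin p → V) → ℝ) (β : (Fin q → V) → ℝ) : DForm V p q :=
  fun x y => α x * β y

/-- Powers of a double form for the exterior product. -/
noncomputable def dpow {V : Type*} {a b : ℕ} (ω : DForm V a b) : (k : ℕ) → DForm V (a * k) (b * k)
  | 0 => fun _ _ => 1
  | k + 1 => dmul (dpow ω k) ω

/-- The metric, as a `(1,1)`-double form. -/
noncomputable def gmetric {V : Type*} [NormedAddCommGroup V] [InnerProductSpace ℝ V] :
    DForm V 1 1 := fun x y => (inner ℝ (x 0) (y 0) : ℝ)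

/-- A symmetric bilinear form as a `(1,1)`-double form. -/
def bilinD {V : Type*} [AddCommGroup V] [Module ℝ V] (B : V →ₗ[ℝ] V →ₗ[ℝ] ℝ) : DForm V 1 1 :=
  fun x y => B (x 0) (y 0)

/-- The scalar given by a `(0,0)`-double form. -/
def toScalar {V : Type*} (ω : DForm V 0 0) : ℝ := ω Fin.elim0 Fin.elim0

/-- Ricci contraction of a double form with respect to an orthonormal basis. -/
noncomputable def cD {V : Type*} [NormedAddCommGroup V] [InnerProductSpace ℝ V] {n : ℕ}
    (b : OrthonormalBasis (Fin n) ℝ V) {p q : ℕ} (ω : DForm V (p + 1) (q + 1)) : DForm V p q :=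
  fun x y => ∑ i : Fin n, ω (Fin.cons (b i) x) (Fin.cons (b i) y)

/-- Iterated Ricci contraction. -/
noncomputable def cIter {V : Type*} [NormedAddCommGroup V] [InnerProductSpace ℝ V] {n : ℕ}
    (b : OrthonormalBasis (Fin n) ℝ V) :
    ∀ (m : ℕ) {p q : ℕ}, DForm V (p + m) (q + m) → DForm V p q
  | 0, _, _, ω => ω
  | m + 1, _, _, ω => cIter b m (cD b ω)

/-- Symmetry of a `(p,p)`-double form. -/
def IsSymmD {V : Type*} {p : ℕ} (ω : DForm V p p) : Prop := ∀ x y, ω x y = ω y x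

/-- A double form is alternating in each group of arguments. -/
def IsAltD {V : Type*} {p q : ℕ} (ω : DForm V p q) : Prop :=
  (∀ (σ : Equiv.Perm (Fin p)) (x : Fin p → V) (y : Fin q → V),
      ω (x ∘ σ) y = ((Equiv.Perm.sign σ : ℤ) : ℝ) * ω x y) ∧
  (∀ (τ : Equiv.Perm (Fin q)) (x : Fin p → V) (y : Fin q → V),
      ω x (y ∘ τ) = ((Equiv.Perm.sign τ : ℤ) : ℝ) * ω x y)

/-- A double form is multilinear in each argument. -/
def IsMultilinearD {V : Type*} [AddCommGroup V] [Module ℝ V] {p q : ℕ}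
    (ω : DForm V p q) : Prop :=
  (∀ (x : Fin p → V) (i : Fin p) (u v : V) (c : ℝ) (y : Fin q → V),
      ω (Function.update x i (u + c • v)) y
        = ω (Function.update x i u) y + c * ω (Function.update x i v) y) ∧
  (∀ (x : Fin p → V) (y : Fin q → V) (j : Fin q) (u v : V) (c : ℝ),
      ω x (Function.update y j (u + c • v))
        = ω x (Function.update y j u) + c * ω x (Function.update y j v))

/-- The first Bianchi identity for a `(p,q)`-double form. -/
def FirstBianchiD {V : Type*} {p q : ℕ} (ω : DForm V p q) : Prop :=
  ∀ (x : Fin (p + 1) → V) (y : Fin q → V),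
    ∑ i : Fin (p + 1), ((-1 : ℝ) ^ (i : ℕ)) * ω (i.removeNth x) y = 0

/-- The volume form associated to an (oriented) orthonormal basis, extended by `0`
to tuples of the wrong length. -/
noncomputable def volA {V : Type*} [NormedAddCommGroup V] [InnerProductSpace ℝ V] {n : ℕ}
    (b : OrthonormalBasis (Fin n) ℝ V) {m : ℕ} (v : Fin m → V) : ℝ :=
  if h : m = n then
    Matrix.det (Matrix.of fun i j : Fin n => (inner ℝ (b i) (v (Fin.cast h.symm j)) : ℝ)) else 0

/-- Generalized Hodge star operator on double forms. -/
noncomputable def starD {V : Type*} [NormedAddCommGroup V] [InnerProductSpace ℝ V] {n : ℕ}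
    (b : OrthonormalBasis (Fin n) ℝ V) {p q : ℕ} (ω : DForm V p q) :
    DForm V (n - p) (n - q) := fun x y =>
  (1 / (p.factorial * q.factorial : ℝ)) *
    ∑ i : Fin p → Fin n, ∑ j : Fin q → Fin n,
      ω (fun a => b (i a)) (fun a => b (j a)) *
        volA b (Fin.append (fun a => b (i a)) x) * volA b (Fin.append (fun a => b (j a)) y)

/-- The scalar `⋆ω` of an `(n,n)`-double form. -/
noncomputable def starScalar {V : Type*} [NormedAddCommGroup V] [InnerProductSpace ℝ V] {n : ℕ}
    (b : OrthonormalBasis (Fin n) ℝ V) (ω : DForm V n n) : ℝ :=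
  toScalar (castD (Nat.sub_self n) (Nat.sub_self n) (starD b ω))


noncomputable section

def sgn {N : ℕ} (σ : Equiv.Perm (Fin N)) : ℝ := ((Equiv.Perm.sign σ : ℤ) : ℝ)

lemma sgn_mul {N : ℕ} (σ τ : Equiv.Perm (Fin N)) : sgn (σ * τ) = sgn σ * sgn τ := by
  simp [sgn]

lemma sgn_sq {N : ℕ} (σ : Equiv.Perm (Fin N)) : sgn σ * sgn σ = 1 := by
  rcases Int.units_eq_one_or (Equiv.Perm.sign σ) with h | h <;> simp [sgn, h]

lemma sgn_one {N : ℕ} : sgn (1 : Equiv.Perm (Fin N)) = 1 := by simp [sgn]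

lemma key {N : ℕ} (π : Equiv.Perm (Fin N)) (F : Equiv.Perm (Fin N) → ℝ) :
    ∑ σ : Equiv.Perm (Fin N), sgn σ * F (σ * π)
      = sgn π * ∑ σ : Equiv.Perm (Fin N), sgn σ * F σ := by
  rw [Finset.mul_sum]
  refine Fintype.sum_equiv (Equiv.mulRight π) _ _ (fun σ => ?_)
  simp only [Equiv.coe_mulRight, sgn_mul]
  ring_nf
  rw [sq, sgn_sq, mul_one]

/-- block permutation -/
def bp {p q : ℕ} (σ : Equiv.Perm (Fin p)) (τ : Equiv.Perm (Fin q)) : Equiv.Perm (Fin (p + q)) :=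
  (finSumFinEquiv (m := p) (n := q)).permCongr (Equiv.sumCongr σ τ)

@[simp] lemma bp_castAdd {p q : ℕ} (σ : Equiv.Perm (Fin p)) (τ : Equiv.Perm (Fin q)) (i : Fin p) :
    bp σ τ (Fin.castAdd q i) = Fin.castAdd q (σ i) := by
  simp [bp, Equiv.permCongr_apply]

@[simp] lemma bp_natAdd {p q : ℕ} (σ : Equiv.Perm (Fin p)) (τ : Equiv.Perm (Fin q)) (j : Fin q) :
    bp σ τ (Fin.natAdd p j) = Fin.natAdd p (τ j) := by
  simp [bp, Equiv.permCongr_apply]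

@[simp] lemma sgn_bp {p q : ℕ} (σ : Equiv.Perm (Fin p)) (τ : Equiv.Perm (Fin q)) :
    sgn (bp σ τ) = sgn σ * sgn τ := by
  simp only [sgn, bp, Equiv.Perm.sign_permCongr]
  rw [show Equiv.sumCongr σ τ = Equiv.Perm.sumCongr σ τ from rfl, Equiv.Perm.sign_sumCongr]
  push_cast
  ring

/-- transport a permutation along an equality of sizes -/
def cpm {N n : ℕ} (h : N = n) (σ : Equiv.Perm (Fin N)) : Equiv.Perm (Fin n) :=
  (finCongr h).permCongr σ

@[simp] lemma cpm_cast {N n : ℕ} (h : N = n) (σ : Equiv.Perm (Fin N)) (i : Fin N) :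
    cpm h σ (Fin.cast h i) = Fin.cast h (σ i) := by
  simp [cpm, Equiv.permCongr_apply]

@[simp] lemma sgn_cpm {N n : ℕ} (h : N = n) (σ : Equiv.Perm (Fin N)) :
    sgn (cpm h σ) = sgn σ := by
  simp [sgn, cpm, Equiv.Perm.sign_permCongr]

end
section Helpers2
open Equiv Finset

lemma sgn_def {N : ℕ} (σ : Equiv.Perm (Fin N)) : ((Equiv.Perm.sign σ : ℤ) : ℝ) = sgn σ := rfl

lemma key2 {N : ℕ} (π ρ : Equiv.Perm (Fin N)) (F : Equiv.Perm (Fin N) → Equiv.Perm (Fin N) → ℝ) :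
    ∑ σ : Equiv.Perm (Fin N), ∑ τ : Equiv.Perm (Fin N), sgn σ * sgn τ * F (σ * π) (τ * ρ)
      = sgn π * sgn ρ * ∑ σ : Equiv.Perm (Fin N), ∑ τ : Equiv.Perm (Fin N), sgn σ * sgn τ * F σ τ := by
  have h1 : ∀ μ : Equiv.Perm (Fin N),
      ∑ τ : Equiv.Perm (Fin N), sgn τ * F μ (τ * ρ) = sgn ρ * ∑ τ, sgn τ * F μ τ :=
    fun μ => key ρ (F μ)
  calc ∑ σ : Equiv.Perm (Fin N), ∑ τ : Equiv.Perm (Fin N), sgn σ * sgn τ * F (σ * π) (τ * ρ)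
      = ∑ σ : Equiv.Perm (Fin N), sgn σ * (sgn ρ * ∑ τ, sgn τ * F (σ * π) τ) := by
        refine Finset.sum_congr rfl fun σ _ => ?_
        rw [← h1 (σ * π), Finset.mul_sum]
        exact Finset.sum_congr rfl fun τ _ => by ring
    _ = sgn ρ * ∑ σ : Equiv.Perm (Fin N), sgn σ * ∑ τ, sgn τ * F (σ * π) τ := by
        rw [Finset.mul_sum]; exact Finset.sum_congr rfl fun σ _ => by ring
    _ = sgn ρ * (sgn π * ∑ σ, sgn σ * ∑ τ, sgn τ * F σ τ) := by
        rw [key π (fun μ => ∑ τ, sgn τ * F μ τ)]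
    _ = sgn π * sgn ρ * ∑ σ : Equiv.Perm (Fin N), ∑ τ : Equiv.Perm (Fin N), sgn σ * sgn τ * F σ τ := by
        simp only [Finset.mul_sum]
        exact Finset.sum_congr rfl fun σ _ => Finset.sum_congr rfl fun τ _ => by ring

lemma swap4 {α β γ δ M : Type*} [Fintype α] [Fintype β] [Fintype γ] [Fintype δ]
    [AddCommMonoid M] (f : α → β → γ → δ → M) :
    ∑ a : α, ∑ b : β, ∑ c : γ, ∑ d : δ, f a b c d
      = ∑ c : γ, ∑ d : δ, ∑ a : α, ∑ b : β, f a b c d := by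
  calc ∑ a : α, ∑ b : β, ∑ c : γ, ∑ d : δ, f a b c d
      = ∑ a : α, ∑ c : γ, ∑ b : β, ∑ d : δ, f a b c d :=
        Finset.sum_congr rfl fun a _ => Finset.sum_comm
    _ = ∑ c : γ, ∑ a : α, ∑ b : β, ∑ d : δ, f a b c d := Finset.sum_comm
    _ = ∑ c : γ, ∑ a : α, ∑ d : δ, ∑ b : β, f a b c d :=
        Finset.sum_congr rfl fun c _ => Finset.sum_congr rfl fun a _ => Finset.sum_comm
    _ = ∑ c : γ, ∑ d : δ, ∑ a : α, ∑ b : β, f a b c d :=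
        Finset.sum_congr rfl fun c _ => Finset.sum_comm

end Helpers2
section Grind
open Equiv Finset

lemma grind {N : ℕ} {G : Type*} [Fintype G] (C : ℝ) (E : G → Equiv.Perm (Fin N)) (w : G → ℝ)
    (hsE : ∀ g, sgn (E g) = w g) (H : Equiv.Perm (Fin N) → Equiv.Perm (Fin N) → ℝ)
    (hC : C * ((Fintype.card G : ℝ) * (Fintype.card G : ℝ)) = 1) :
    C * ∑ σ : Equiv.Perm (Fin N), ∑ τ : Equiv.Perm (Fin N), ∑ g : G, ∑ g' : G,
        w g * w g' * (sgn σ * sgn τ * H (σ * E g) (τ * E g'))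
      = ∑ σ : Equiv.Perm (Fin N), ∑ τ : Equiv.Perm (Fin N), sgn σ * sgn τ * H σ τ := by
  have hw : ∀ g, w g * w g = 1 := by
    intro g; rw [← hsE]; exact sgn_sq _
  have step : ∀ g g' : G,
      ∑ σ : Equiv.Perm (Fin N), ∑ τ : Equiv.Perm (Fin N),
        w g * w g' * (sgn σ * sgn τ * H (σ * E g) (τ * E g'))
      = ∑ σ : Equiv.Perm (Fin N), ∑ τ : Equiv.Perm (Fin N), sgn σ * sgn τ * H σ τ := by
    intro g g'
    have : ∑ σ : Equiv.Perm (Fin N), ∑ τ : Equiv.Perm (Fin N),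
        w g * w g' * (sgn σ * sgn τ * H (σ * E g) (τ * E g'))
        = w g * w g' * ∑ σ : Equiv.Perm (Fin N), ∑ τ : Equiv.Perm (Fin N),
            sgn σ * sgn τ * H (σ * E g) (τ * E g') := by
      simp only [Finset.mul_sum]
    rw [this, key2 (E g) (E g') H, hsE, hsE]
    have h2 : w g * w g' * (w g * w g' * ∑ σ : Equiv.Perm (Fin N), ∑ τ : Equiv.Perm (Fin N),
        sgn σ * sgn τ * H σ τ) = (w g * w g) * (w g' * w g') *
        ∑ σ : Equiv.Perm (Fin N), ∑ τ : Equiv.Perm (Fin N), sgn σ * sgn τ * H σ τ := by ring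
    rw [h2, hw, hw, one_mul, one_mul]
  calc C * ∑ σ : Equiv.Perm (Fin N), ∑ τ : Equiv.Perm (Fin N), ∑ g : G, ∑ g' : G,
        w g * w g' * (sgn σ * sgn τ * H (σ * E g) (τ * E g'))
      = C * ∑ g : G, ∑ g' : G, ∑ σ : Equiv.Perm (Fin N), ∑ τ : Equiv.Perm (Fin N),
        w g * w g' * (sgn σ * sgn τ * H (σ * E g) (τ * E g')) := by rw [swap4]
    _ = C * ∑ g : G, ∑ g' : G, ∑ σ : Equiv.Perm (Fin N), ∑ τ : Equiv.Perm (Fin N),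
        sgn σ * sgn τ * H σ τ := by
        congr 1
        exact Finset.sum_congr rfl fun g _ => Finset.sum_congr rfl fun g' _ => step g g'
    _ = ∑ σ : Equiv.Perm (Fin N), ∑ τ : Equiv.Perm (Fin N), sgn σ * sgn τ * H σ τ := by
        rw [Finset.sum_const, Finset.sum_const, Finset.card_univ, nsmul_eq_mul, nsmul_eq_mul,
          ← mul_assoc, ← mul_assoc, mul_assoc C, hC, one_mul]
end Grind
section DpowApply
open Equiv Finset

set_option maxHeartbeats 1000000 in
lemma dpow_apply {V : Type*} (A : DForm V 1 1) (k : ℕ) (x y : Fin (1 * k) → V) :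
    dpow A k x y =
      ∑ σ : Equiv.Perm (Fin (1 * k)), ∑ τ : Equiv.Perm (Fin (1 * k)),
        sgn σ * sgn τ * ∏ i : Fin (1 * k), A (fun _ => x (σ i)) (fun _ => y (τ i)) := by
  induction k with
  | zero => simp [dpow, sgn]
  | succ k ih =>
    have hlast : Fin.last (1 * k) = Fin.natAdd (1 * k) (0 : Fin 1) := by ext; simp
    set E : Equiv.Perm (Fin (1 * k)) → Equiv.Perm (Fin (1 * k + 1)) :=
      fun π => bp π (1 : Equiv.Perm (Fin 1)) with hE
    set H : Equiv.Perm (Fin (1 * k + 1)) → Equiv.Perm (Fin (1 * k + 1)) → ℝ :=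
      fun μ ν => ∏ i : Fin (1 * k + 1), A (fun _ => x (μ i)) (fun _ => y (ν i)) with hH
    have hsE : ∀ π : Equiv.Perm (Fin (1 * k)), sgn (E π) = sgn π := by
      intro π; rw [hE]; simp only [sgn_bp, sgn_one, mul_one]
    have hprod : ∀ (σ τ : Equiv.Perm (Fin (1 * k + 1))) (σ' τ' : Equiv.Perm (Fin (1 * k))),
        (∏ i : Fin (1 * k), A (fun _ => x (σ (Fin.castAdd 1 (σ' i))))
            (fun _ => y (τ (Fin.castAdd 1 (τ' i))))) *
          (A (fun i : Fin 1 => x (σ (Fin.natAdd (1 * k) i)))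
            (fun j : Fin 1 => y (τ (Fin.natAdd (1 * k) j))))
          = H (σ * E σ') (τ * E τ') := by
      intro σ τ σ' τ'
      simp only [hH]
      rw [Fin.prod_univ_castSucc]
      congr 1
      · refine Finset.prod_congr rfl fun i _ => ?_
        simp only [Equiv.Perm.mul_apply, hE,
          show (Fin.castSucc : Fin (1 * k) → Fin (1 * k + 1)) = Fin.castAdd 1 from rfl, bp_castAdd]
      · rw [hlast]
        simp only [Equiv.Perm.mul_apply, hE, bp_natAdd, Equiv.Perm.one_apply]
        congr 1
        · funext i; rw [Subsingleton.elim i (0 : Fin 1)]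
        · funext j; rw [Subsingleton.elim j (0 : Fin 1)]
    show dmul (dpow A k) A x y = _
    simp only [dmul, ih, sgn_def]
    have hstep : ∀ (σ τ : Equiv.Perm (Fin (1 * k + 1))),
        (sgn σ * sgn τ *
            (∑ σ' : Equiv.Perm (Fin (1 * k)), ∑ τ' : Equiv.Perm (Fin (1 * k)),
              sgn σ' * sgn τ' * ∏ i : Fin (1 * k),
                A (fun _ => x (σ (Fin.castAdd 1 (σ' i)))) (fun _ => y (τ (Fin.castAdd 1 (τ' i)))))) *
          (A (fun i : Fin 1 => x (σ (Fin.natAdd (1 * k) i)))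
            (fun j : Fin 1 => y (τ (Fin.natAdd (1 * k) j))))
        = ∑ σ' : Equiv.Perm (Fin (1 * k)), ∑ τ' : Equiv.Perm (Fin (1 * k)),
            sgn σ' * sgn τ' * (sgn σ * sgn τ * H (σ * E σ') (τ * E τ')) := by
      intro σ τ
      simp only [Finset.mul_sum, Finset.sum_mul]
      refine Finset.sum_congr rfl fun σ' _ => Finset.sum_congr rfl fun τ' _ => ?_
      rw [← hprod σ τ σ' τ']
      ring
    calc (1 / ((1 * k).factorial * Nat.factorial 1 * (1 * k).factorial * Nat.factorial 1 : ℝ)) *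
        ∑ σ : Equiv.Perm (Fin (1 * k + 1)), ∑ τ : Equiv.Perm (Fin (1 * k + 1)),
          (sgn σ * sgn τ *
            (∑ σ' : Equiv.Perm (Fin (1 * k)), ∑ τ' : Equiv.Perm (Fin (1 * k)),
              sgn σ' * sgn τ' * ∏ i : Fin (1 * k),
                A (fun _ => x (σ (Fin.castAdd 1 (σ' i)))) (fun _ => y (τ (Fin.castAdd 1 (τ' i)))))) *
          (A (fun i : Fin 1 => x (σ (Fin.natAdd (1 * k) i)))
            (fun j : Fin 1 => y (τ (Fin.natAdd (1 * k) j))))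
        = (1 / ((1 * k).factorial * Nat.factorial 1 * (1 * k).factorial * Nat.factorial 1 : ℝ)) *
          ∑ σ : Equiv.Perm (Fin (1 * k + 1)), ∑ τ : Equiv.Perm (Fin (1 * k + 1)),
            ∑ σ' : Equiv.Perm (Fin (1 * k)), ∑ τ' : Equiv.Perm (Fin (1 * k)),
              sgn σ' * sgn τ' * (sgn σ * sgn τ * H (σ * E σ') (τ * E τ')) := by
          congr 1
          exact Finset.sum_congr rfl fun σ _ => Finset.sum_congr rfl fun τ _ => hstep σ τ
      _ = ∑ σ : Equiv.Perm (Fin (1 * k + 1)), ∑ τ : Equiv.Perm (Fin (1 * k + 1)),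
            sgn σ * sgn τ * H σ τ := by
          refine grind _ E sgn hsE H ?_
          rw [Fintype.card_perm, Fintype.card_fin]
          have hne : ((1 * k).factorial : ℝ) ≠ 0 := by positivity
          field_simp
          norm_num [Nat.factorial]
      _ = _ := rfl
end DpowApply
section Star
open Equiv Finset

variable {V : Type*} [NormedAddCommGroup V] [InnerProductSpace ℝ V] {n : ℕ}

lemma volA_basis (b : OrthonormalBasis (Fin n) ℝ V) (i : Fin n → Fin n) (x : Fin (n - n) → V) :
    volA b (Fin.append (fun a => b (i a)) x)
      = if h : Function.Bijective i then sgn (Equiv.ofBijective i h) else 0 := by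
  classical
  have hm : n + (n - n) = n := by omega
  rw [volA, dif_pos hm]
  have hentry : ∀ a c : Fin n,
      (inner ℝ (b a) (Fin.append (fun a => b (i a)) x (Fin.cast hm.symm c)) : ℝ)
        = if a = i c then 1 else 0 := by
    intro a c
    have h1 : Fin.cast hm.symm c = Fin.castAdd (n - n) c := rfl
    rw [h1, Fin.append_left]
    exact (orthonormal_iff_ite.mp b.orthonormal) a (i c)
  by_cases h : Function.Bijective i
  · rw [dif_pos h]
    have hM : (Matrix.of fun a c : Fin n =>
        (inner ℝ (b a) (Fin.append (fun a => b (i a)) x (Fin.cast hm.symm c)) : ℝ))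
        = (Equiv.Perm.permMatrix ℝ (Equiv.ofBijective i h)).transpose := by
      ext a c
      rw [Matrix.of_apply, hentry a c, Matrix.transpose_apply]
      simp [Equiv.Perm.permMatrix, PEquiv.toMatrix_apply, Equiv.toPEquiv_apply, eq_comm]
    rw [hM, Matrix.det_transpose, Matrix.det_permutation]
    rfl
  · rw [dif_neg h]
    have hinj : ¬ Function.Injective i := fun hinj => h (Finite.injective_iff_bijective.mp hinj)
    rw [Function.not_injective_iff] at hinj
    obtain ⟨c, c', hcc, hne⟩ := hinj
    refine Matrix.det_zero_of_column_eq hne (fun a => ?_)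
    rw [Matrix.of_apply, Matrix.of_apply, hentry a c, hentry a c', hcc]

lemma sum_perm_support {n : ℕ} (f : (Fin n → Fin n) → ℝ)
    (hf : ∀ i, ¬ Function.Bijective i → f i = 0) :
    ∑ i : Fin n → Fin n, f i = ∑ σ : Equiv.Perm (Fin n), f ⇑σ := by
  classical
  rw [← Finset.sum_filter_of_ne (p := fun i => Function.Bijective i)
    (fun x _ hx => by by_contra hb; exact hx (hf x hb))]
  refine Finset.sum_bij' (fun a ha => Equiv.ofBijective a (Finset.mem_filter.mp ha).2)
    (fun σ _ => ⇑σ) ?_ ?_ ?_ ?_ ?_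
  · intro a ha; exact Finset.mem_univ _
  · intro σ _
    simp only [Finset.mem_filter, Finset.mem_univ, true_and]
    exact σ.bijective
  · intro a ha; rfl
  · intro σ _; exact Equiv.ext fun x => rfl
  · intro a ha; rfl

lemma starScalar_eq (b : OrthonormalBasis (Fin n) ℝ V) (ω : DForm V n n) :
    starScalar b ω = (1 / ((n.factorial : ℝ) * n.factorial)) *
      ∑ σ : Equiv.Perm (Fin n), ∑ τ : Equiv.Perm (Fin n),
        sgn σ * sgn τ * ω (fun a => b (σ a)) (fun a => b (τ a)) := by
  classical
  simp only [starScalar, toScalar, castD, starD]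
  congr 1
  have hv : ∀ (i : Fin n → Fin n) (x : Fin (n - n) → V),
      volA b (Fin.append (fun a => b (i a)) x)
        = if h : Function.Bijective i then sgn (Equiv.ofBijective i h) else 0 :=
    volA_basis b
  calc ∑ i : Fin n → Fin n, ∑ j : Fin n → Fin n,
        ω (fun a => b (i a)) (fun a => b (j a)) *
          volA b (Fin.append (fun a => b (i a)) (fun a => Fin.elim0 (Fin.cast (Nat.sub_self n) a))) *
          volA b (Fin.append (fun a => b (j a)) (fun a => Fin.elim0 (Fin.cast (Nat.sub_self n) a)))
      = ∑ i : Fin n → Fin n, ∑ j : Fin n → Fin n,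
        ω (fun a => b (i a)) (fun a => b (j a)) *
          (if h : Function.Bijective i then sgn (Equiv.ofBijective i h) else 0) *
          (if h : Function.Bijective j then sgn (Equiv.ofBijective j h) else 0) := by
        refine Finset.sum_congr rfl fun i _ => Finset.sum_congr rfl fun j _ => ?_
        rw [hv, hv]
    _ = ∑ σ : Equiv.Perm (Fin n), ∑ τ : Equiv.Perm (Fin n),
        sgn σ * sgn τ * ω (fun a => b (σ a)) (fun a => b (τ a)) := by
        rw [sum_perm_support _ (fun i hi => by
          simp only [dif_neg hi, mul_zero, zero_mul, Finset.sum_const_zero])]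
        refine Finset.sum_congr rfl fun σ _ => ?_
        rw [sum_perm_support _ (fun j hj => by simp only [dif_neg hj, mul_zero])]
        refine Finset.sum_congr rfl fun τ _ => ?_
        rw [dif_pos σ.bijective, dif_pos τ.bijective]
        have h1 : Equiv.ofBijective (⇑σ) σ.bijective = σ := Equiv.ext fun x => rfl
        have h2 : Equiv.ofBijective (⇑τ) τ.bijective = τ := Equiv.ext fun x => rfl
        rw [h1, h2]
        ring
end Star
section Count
open Equiv Finset

lemma exists_perm_image {n : ℕ} (s t : Finset (Fin n)) (h : s.card = t.card) :
    ∃ π : Equiv.Perm (Fin n), s.image ⇑π = t := by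
  classical
  have hcompl : Fintype.card {x // ¬ x ∈ s} = Fintype.card {x // ¬ x ∈ t} := by
    rw [Fintype.card_subtype_compl, Fintype.card_subtype_compl, Fintype.card_coe,
      Fintype.card_coe, h]
  have e : {x // x ∈ s} ≃ {x // x ∈ t} :=
    Fintype.equivOfCardEq (by rw [Fintype.card_coe, Fintype.card_coe, h])
  have f : {x // ¬ x ∈ s} ≃ {x // ¬ x ∈ t} := Fintype.equivOfCardEq hcompl
  refine ⟨(Equiv.sumCompl (· ∈ s)).symm.trans ((e.sumCongr f).trans (Equiv.sumCompl (· ∈ t))), ?_⟩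
  have hsub : s.image ⇑((Equiv.sumCompl (· ∈ s)).symm.trans ((e.sumCongr f).trans
      (Equiv.sumCompl (· ∈ t)))) ⊆ t := by
    intro y hy
    rw [Finset.mem_image] at hy
    obtain ⟨x, hx, rfl⟩ := hy
    simp only [Equiv.trans_apply, Equiv.sumCompl_symm_apply_of_pos (p := (· ∈ s)) hx, Equiv.sumCongr_apply,
      Sum.map_inl, Equiv.sumCompl_apply_inl]
    exact (e ⟨x, hx⟩).2
  refine Finset.eq_of_subset_of_card_le hsub ?_
  rw [Finset.card_image_of_injective _ (Equiv.injective _), h]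

lemma perm_prod_count {n K : ℕ} (lam : Fin n → ℝ) (c : Fin K → Fin n)
    (hc : Function.Injective c) (hK : K ≤ n) :
    ∑ μ : Equiv.Perm (Fin n), ∏ j : Fin K, lam (μ (c j))
      = (K.factorial * (n - K).factorial : ℝ) *
          ∑ t ∈ Finset.univ.powersetCard K, ∏ i ∈ t, lam i := by
  classical
  set T : Equiv.Perm (Fin n) → Finset (Fin n) :=
    fun μ => (Finset.univ : Finset (Fin K)).image (fun j => μ (c j)) with hT
  have hTinj : ∀ μ : Equiv.Perm (Fin n), Function.Injective (fun j => μ (c j)) :=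
    fun μ => μ.injective.comp hc
  have hTcard : ∀ μ, (T μ).card = K := by
    intro μ
    rw [hT, Finset.card_image_of_injective _ (hTinj μ), Finset.card_univ, Fintype.card_fin]
  have hTmem : ∀ μ : Equiv.Perm (Fin n), T μ ∈ Finset.univ.powersetCard K := by
    intro μ
    rw [Finset.mem_powersetCard]
    exact ⟨Finset.subset_univ _, hTcard μ⟩
  have hTmul : ∀ (π μ : Equiv.Perm (Fin n)), T (π * μ) = (T μ).image ⇑π := by
    intro π μ
    rw [hT, Finset.image_image]
    rfl
  have hTim : (Finset.univ : Finset (Equiv.Perm (Fin n))).image T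
      = Finset.univ.powersetCard K := by
    apply Finset.Subset.antisymm
    · intro t ht
      rw [Finset.mem_image] at ht
      obtain ⟨μ, _, rfl⟩ := ht
      exact hTmem μ
    · intro t ht
      rw [Finset.mem_powersetCard] at ht
      obtain ⟨π, hπ⟩ := exists_perm_image (T 1) t (by rw [hTcard, ht.2])
      rw [Finset.mem_image]
      exact ⟨π * 1, Finset.mem_univ _, by rw [hTmul, hπ]⟩
  have hfib : ∀ t ∈ Finset.univ.powersetCard K, ∀ t' ∈ Finset.univ.powersetCard K,
      ((Finset.univ : Finset (Equiv.Perm (Fin n))).filter fun μ => T μ = t).card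
        = ((Finset.univ : Finset (Equiv.Perm (Fin n))).filter fun μ => T μ = t').card := by
    intro t ht t' ht'
    rw [Finset.mem_powersetCard] at ht ht'
    obtain ⟨π, hπ⟩ := exists_perm_image t t' (by rw [ht.2, ht'.2])
    refine Finset.card_bij' (fun μ _ => π * μ) (fun μ _ => π⁻¹ * μ) ?_ ?_ ?_ ?_
    · intro μ hμ
      rw [Finset.mem_filter] at hμ ⊢
      exact ⟨Finset.mem_univ _, by rw [hTmul, hμ.2, hπ]⟩
    · intro μ hμ
      rw [Finset.mem_filter] at hμ ⊢
      refine ⟨Finset.mem_univ _, ?_⟩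
      rw [hTmul, hμ.2, ← hπ, Finset.image_image]
      have : (⇑π⁻¹ ∘ ⇑π) = id := by
        funext z; simp
      rw [this, Finset.image_id]
    · intro μ _; group
    · intro μ _; group
  have hfibval : ∀ t ∈ Finset.univ.powersetCard K,
      ((Finset.univ : Finset (Equiv.Perm (Fin n))).filter fun μ => T μ = t).card = K.factorial * (n - K).factorial := by
    intro t ht
    have htot : Fintype.card (Equiv.Perm (Fin n))
        = ∑ t' ∈ Finset.univ.powersetCard K, ((Finset.univ : Finset (Equiv.Perm (Fin n))).filter fun μ => T μ = t').card := by
      rw [← Finset.card_univ]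
      exact Finset.card_eq_sum_card_fiberwise fun μ _ => hTmem μ
    rw [Fintype.card_perm, Fintype.card_fin] at htot
    have hconst : ∑ t' ∈ Finset.univ.powersetCard K,
        ((Finset.univ : Finset (Equiv.Perm (Fin n))).filter fun μ => T μ = t').card
        = ((Finset.univ : Finset (Fin n)).powersetCard K).card * ((Finset.univ : Finset (Equiv.Perm (Fin n))).filter fun μ => T μ = t).card := by
      rw [Finset.sum_congr rfl (fun t' ht' => hfib t' ht' t ht), Finset.sum_const, smul_eq_mul]
    rw [hconst, Finset.card_powersetCard, Finset.card_univ, Fintype.card_fin] at htot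
    have h2 : n.choose K * (K.factorial * (n - K).factorial) = n.factorial := by
      rw [← mul_assoc]
      exact Nat.choose_mul_factorial_mul_factorial hK
    exact Nat.eq_of_mul_eq_mul_left (Nat.choose_pos hK) (htot.symm.trans h2.symm)
  calc ∑ μ : Equiv.Perm (Fin n), ∏ j : Fin K, lam (μ (c j))
      = ∑ μ : Equiv.Perm (Fin n), ∏ i ∈ T μ, lam i := by
        refine Finset.sum_congr rfl fun μ _ => ?_
        rw [hT]
        exact (Finset.prod_image fun x _ y _ hxy => hTinj μ hxy).symm
    _ = ∑ t ∈ (Finset.univ : Finset (Equiv.Perm (Fin n))).image T,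
          ((Finset.univ : Finset (Equiv.Perm (Fin n))).filter fun μ => T μ = t).card • ∏ i ∈ t, lam i :=
        Finset.sum_comp (fun t => ∏ i ∈ t, lam i) T
    _ = ∑ t ∈ Finset.univ.powersetCard K,
          (K.factorial * (n - K).factorial : ℝ) * ∏ i ∈ t, lam i := by
        rw [hTim]
        refine Finset.sum_congr rfl fun t ht => ?_
        rw [hfibval t ht, nsmul_eq_mul]
        push_cast
        ring
    _ = (K.factorial * (n - K).factorial : ℝ) *
          ∑ t ∈ Finset.univ.powersetCard K, ∏ i ∈ t, lam i := by
        rw [Finset.mul_sum]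
end Count
section Master
open Equiv Finset

abbrev Gtype (m k : ℕ) :=
  Equiv.Perm (Fin (1 * m + 1 * k)) × Equiv.Perm (Fin (1 * m)) × Equiv.Perm (Fin (1 * k))

noncomputable def wfun {m k : ℕ} (g : Gtype m k) : ℝ := sgn g.1 * sgn g.2.1 * sgn g.2.2

noncomputable def Efun {m k n : ℕ} (h : 1 * m + 1 * k = n) (g : Gtype m k) :
    Equiv.Perm (Fin n) := cpm h (g.1 * bp g.2.1 g.2.2)

noncomputable def Hfun {n : ℕ} (lam : Fin n → ℝ) {m k : ℕ} (h : 1 * m + 1 * k = n)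
    (μ ν : Equiv.Perm (Fin n)) : ℝ :=
  (∏ i : Fin (1 * m),
      if μ (Fin.cast h (Fin.castAdd (1 * k) i)) = ν (Fin.cast h (Fin.castAdd (1 * k) i))
        then (1 : ℝ) else 0) *
  (∏ j : Fin (1 * k),
      if μ (Fin.cast h (Fin.natAdd (1 * m) j)) = ν (Fin.cast h (Fin.natAdd (1 * m) j))
        then lam (μ (Fin.cast h (Fin.natAdd (1 * m) j))) else 0)

lemma sgn_Efun {m k n : ℕ} (h : 1 * m + 1 * k = n) (g : Gtype m k) :
    sgn (Efun h g) = wfun g := by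
  rw [Efun, wfun, sgn_cpm, sgn_mul, sgn_bp, mul_assoc]

lemma card_Gtype (m k : ℕ) : Fintype.card (Gtype m k)
    = (1 * m + 1 * k).factorial * ((1 * m).factorial * (1 * k).factorial) := by
  simp [Fintype.card_prod, Fintype.card_perm, Fintype.card_fin]

lemma Efun_castAdd {m k n : ℕ} (h : 1 * m + 1 * k = n) (g : Gtype m k) (i : Fin (1 * m)) :
    Efun h g (Fin.cast h (Fin.castAdd (1 * k) i))
      = Fin.cast h (g.1 (Fin.castAdd (1 * k) (g.2.1 i))) := by
  rw [Efun, cpm_cast, Equiv.Perm.mul_apply, bp_castAdd]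

lemma Efun_natAdd {m k n : ℕ} (h : 1 * m + 1 * k = n) (g : Gtype m k) (j : Fin (1 * k)) :
    Efun h g (Fin.cast h (Fin.natAdd (1 * m) j))
      = Fin.cast h (g.1 (Fin.natAdd (1 * m) (g.2.2 j))) := by
  rw [Efun, cpm_cast, Equiv.Perm.mul_apply, bp_natAdd]

lemma fubini8 {A B C : Type*} [Fintype A] [Fintype B] [Fintype C]
    (f : A → A → B → B → C → C → ℝ) :
    ∑ x : A, ∑ x' : A, ∑ p : B, ∑ p' : B, ∑ q : C, ∑ q' : C, f x x' p p' q q'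
      = ∑ g : A × B × C, ∑ g' : A × B × C, f g.1 g'.1 g.2.1 g'.2.1 g.2.2 g'.2.2 := by
  simp only [Fintype.sum_prod_type]
  refine Finset.sum_congr rfl fun x _ => ?_
  calc ∑ x' : A, ∑ p : B, ∑ p' : B, ∑ q : C, ∑ q' : C, f x x' p p' q q'
      = ∑ x' : A, ∑ p : B, ∑ q : C, ∑ p' : B, ∑ q' : C, f x x' p p' q q' := by
        refine Finset.sum_congr rfl fun x' _ => Finset.sum_congr rfl fun p _ => ?_
        exact Finset.sum_comm
    _ = ∑ p : B, ∑ x' : A, ∑ q : C, ∑ p' : B, ∑ q' : C, f x x' p p' q q' := Finset.sum_comm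
    _ = ∑ p : B, ∑ q : C, ∑ x' : A, ∑ p' : B, ∑ q' : C, f x x' p p' q q' := by
        refine Finset.sum_congr rfl fun p _ => ?_
        exact Finset.sum_comm
end Master
section MasterLemma
open Equiv Finset

set_option maxHeartbeats 2000000 in
lemma master {V : Type*} [NormedAddCommGroup V] [InnerProductSpace ℝ V] {n k m : ℕ}
    (b : OrthonormalBasis (Fin n) ℝ V) (B : V →ₗ[ℝ] V →ₗ[ℝ] ℝ) (lam : Fin n → ℝ)
    (hdiag : ∀ i j, B (b i) (b j) = if i = j then lam i else 0)
    (h : 1 * m + 1 * k = n) (σ τ : Equiv.Perm (Fin n)) :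
    sgn σ * sgn τ * dmul (dpow (gmetric (V := V)) m) (dpow (bilinD B) k)
        (fun i => b (σ (Fin.cast h i))) (fun j => b (τ (Fin.cast h j)))
      = (1 / ((1*m).factorial * (1*k).factorial * (1*m).factorial * (1*k).factorial : ℝ)) *
        ∑ g : Gtype m k, ∑ g' : Gtype m k,
          wfun g * wfun g' * (sgn σ * sgn τ * Hfun lam h (σ * Efun h g) (τ * Efun h g')) := by
  have horth : ∀ a c : Fin n, (inner ℝ (b a) (b c) : ℝ) = if a = c then (1:ℝ) else 0 :=
    orthonormal_iff_ite.mp b.orthonormal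
  simp only [dmul, dpow_apply, gmetric, bilinD, horth, hdiag, sgn_def]
  rw [mul_left_comm]
  congr 1
  calc (sgn σ * sgn τ *
        ∑ σ' : Equiv.Perm (Fin (1 * m + 1 * k)),
          ∑ τ' : Equiv.Perm (Fin (1 * m + 1 * k)),
            (sgn σ' * sgn τ' *
                ∑ σ₁ : Equiv.Perm (Fin (1 * m)),
                  ∑ τ₁ : Equiv.Perm (Fin (1 * m)),
                    sgn σ₁ * sgn τ₁ *
                      ∏ i : Fin (1 * m),
                        if σ (Fin.cast h (σ' (Fin.castAdd (1 * k) (σ₁ i)))) =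
                              τ (Fin.cast h (τ' (Fin.castAdd (1 * k) (τ₁ i)))) then
                          (1:ℝ)
                        else 0) *
              ∑ σ₂ : Equiv.Perm (Fin (1 * k)),
                ∑ τ₂ : Equiv.Perm (Fin (1 * k)),
                  sgn σ₂ * sgn τ₂ *
                    ∏ j : Fin (1 * k),
                      if σ (Fin.cast h (σ' (Fin.natAdd (1 * m) (σ₂ j)))) =
                            τ (Fin.cast h (τ' (Fin.natAdd (1 * m) (τ₂ j)))) then
                        lam (σ (Fin.cast h (σ' (Fin.natAdd (1 * m) (σ₂ j)))))
                      else 0)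
      = ∑ σ' : Equiv.Perm (Fin (1 * m + 1 * k)),
          ∑ τ' : Equiv.Perm (Fin (1 * m + 1 * k)),
          ∑ σ₁ : Equiv.Perm (Fin (1 * m)),
          ∑ τ₁ : Equiv.Perm (Fin (1 * m)),
          ∑ σ₂ : Equiv.Perm (Fin (1 * k)),
          ∑ τ₂ : Equiv.Perm (Fin (1 * k)),
            (sgn σ' * sgn σ₁ * sgn σ₂) * (sgn τ' * sgn τ₁ * sgn τ₂) *
              (sgn σ * sgn τ *
                ((∏ i : Fin (1 * m),
                  if σ (Fin.cast h (σ' (Fin.castAdd (1 * k) (σ₁ i)))) =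
                        τ (Fin.cast h (τ' (Fin.castAdd (1 * k) (τ₁ i)))) then
                    (1:ℝ)
                  else 0) *
                 (∏ j : Fin (1 * k),
                  if σ (Fin.cast h (σ' (Fin.natAdd (1 * m) (σ₂ j)))) =
                        τ (Fin.cast h (τ' (Fin.natAdd (1 * m) (τ₂ j)))) then
                    lam (σ (Fin.cast h (σ' (Fin.natAdd (1 * m) (σ₂ j)))))
                  else 0))) := by
        simp only [Finset.mul_sum, Finset.sum_mul]
        refine Finset.sum_congr rfl fun σ' _ => Finset.sum_congr rfl fun τ' _ => ?_
        rw [swap4]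
        refine Finset.sum_congr rfl fun σ₁ _ => Finset.sum_congr rfl fun τ₁ _ =>
          Finset.sum_congr rfl fun σ₂ _ => Finset.sum_congr rfl fun τ₂ _ => ?_
        ring
    _ = ∑ g : Gtype m k, ∑ g' : Gtype m k,
          (sgn g.1 * sgn g.2.1 * sgn g.2.2) * (sgn g'.1 * sgn g'.2.1 * sgn g'.2.2) *
            (sgn σ * sgn τ *
              ((∏ i : Fin (1 * m),
                if σ (Fin.cast h (g.1 (Fin.castAdd (1 * k) (g.2.1 i)))) =
                      τ (Fin.cast h (g'.1 (Fin.castAdd (1 * k) (g'.2.1 i)))) then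
                  (1:ℝ)
                else 0) *
               (∏ j : Fin (1 * k),
                if σ (Fin.cast h (g.1 (Fin.natAdd (1 * m) (g.2.2 j)))) =
                      τ (Fin.cast h (g'.1 (Fin.natAdd (1 * m) (g'.2.2 j)))) then
                  lam (σ (Fin.cast h (g.1 (Fin.natAdd (1 * m) (g.2.2 j)))))
                else 0))) := fubini8 _
    _ = ∑ g : Gtype m k, ∑ g' : Gtype m k,
          wfun g * wfun g' * (sgn σ * sgn τ * Hfun lam h (σ * Efun h g) (τ * Efun h g')) := by
        refine Finset.sum_congr rfl fun g _ => Finset.sum_congr rfl fun g' _ => ?_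
        have hP1 : (∏ i : Fin (1 * m),
            if (σ * Efun h g) (Fin.cast h (Fin.castAdd (1 * k) i)) =
                  (τ * Efun h g') (Fin.cast h (Fin.castAdd (1 * k) i)) then (1:ℝ) else 0)
            = ∏ i : Fin (1 * m),
                if σ (Fin.cast h (g.1 (Fin.castAdd (1 * k) (g.2.1 i)))) =
                      τ (Fin.cast h (g'.1 (Fin.castAdd (1 * k) (g'.2.1 i)))) then (1:ℝ) else 0 := by
          refine Finset.prod_congr rfl fun i _ => ?_
          rw [Equiv.Perm.mul_apply, Equiv.Perm.mul_apply, Efun_castAdd, Efun_castAdd]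
        have hP2 : (∏ j : Fin (1 * k),
            if (σ * Efun h g) (Fin.cast h (Fin.natAdd (1 * m) j)) =
                  (τ * Efun h g') (Fin.cast h (Fin.natAdd (1 * m) j)) then
              lam ((σ * Efun h g) (Fin.cast h (Fin.natAdd (1 * m) j))) else 0)
            = ∏ j : Fin (1 * k),
                if σ (Fin.cast h (g.1 (Fin.natAdd (1 * m) (g.2.2 j)))) =
                      τ (Fin.cast h (g'.1 (Fin.natAdd (1 * m) (g'.2.2 j)))) then
                  lam (σ (Fin.cast h (g.1 (Fin.natAdd (1 * m) (g.2.2 j))))) else 0 := by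
          refine Finset.prod_congr rfl fun j _ => ?_
          rw [Equiv.Perm.mul_apply, Equiv.Perm.mul_apply, Efun_natAdd, Efun_natAdd]
        rw [wfun, wfun, Hfun, hP1, hP2]
end MasterLemma
section RhoStep
open Equiv Finset

lemma rho_step {n m k : ℕ} (lam : Fin n → ℝ) (h : 1 * m + 1 * k = n) :
    ∑ σ : Equiv.Perm (Fin n), ∑ τ : Equiv.Perm (Fin n), sgn σ * sgn τ * Hfun lam h σ τ
      = ∑ σ : Equiv.Perm (Fin n), ∏ j : Fin (1 * k), lam (σ (Fin.cast h (Fin.natAdd (1 * m) j))) := by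
  classical
  refine Finset.sum_congr rfl fun σ _ => ?_
  have hre : ∑ τ : Equiv.Perm (Fin n), sgn σ * sgn τ * Hfun lam h σ τ
      = ∑ ρ : Equiv.Perm (Fin n), sgn σ * sgn (σ * ρ) * Hfun lam h σ (σ * ρ) :=
    (Fintype.sum_equiv (Equiv.mulLeft σ)
      (fun ρ => sgn σ * sgn (σ * ρ) * Hfun lam h σ (σ * ρ))
      (fun τ => sgn σ * sgn τ * Hfun lam h σ τ) (fun ρ => rfl)).symm
  rw [hre, Finset.sum_eq_single (1 : Equiv.Perm (Fin n))]
  · rw [mul_one, sgn_sq, one_mul, Hfun]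
    have h1 : (∏ i : Fin (1 * m),
        if σ (Fin.cast h (Fin.castAdd (1 * k) i)) = σ (Fin.cast h (Fin.castAdd (1 * k) i))
          then (1:ℝ) else 0) = 1 := by
      simp
    rw [h1, one_mul]
    refine Finset.prod_congr rfl fun j _ => ?_
    rw [if_pos rfl]
  · intro ρ _ hρ
    have hz : ∃ z : Fin n, ρ z ≠ z := by
      by_contra hc
      push_neg at hc
      exact hρ (Equiv.ext hc)
    obtain ⟨z, hzz⟩ := hz
    have hcases : (∃ i : Fin (1 * m), z = Fin.cast h (Fin.castAdd (1 * k) i)) ∨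
        (∃ j : Fin (1 * k), z = Fin.cast h (Fin.natAdd (1 * m) j)) := by
      by_cases hlt : (z : ℕ) < 1 * m
      · exact Or.inl ⟨⟨(z : ℕ), hlt⟩, by apply Fin.ext; simp⟩
      · have hz2 : (z : ℕ) < 1 * m + 1 * k := by
          have := z.isLt; omega
        refine Or.inr ⟨⟨(z : ℕ) - 1 * m, by omega⟩, ?_⟩
        apply Fin.ext
        simp
        omega
    have hzero : Hfun lam h σ (σ * ρ) = 0 := by
      rw [Hfun]
      rcases hcases with ⟨i, hi⟩ | ⟨j, hj⟩
      · have : (∏ i' : Fin (1 * m),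
            if σ (Fin.cast h (Fin.castAdd (1 * k) i')) =
                (σ * ρ) (Fin.cast h (Fin.castAdd (1 * k) i')) then (1:ℝ) else 0) = 0 := by
          refine Finset.prod_eq_zero (Finset.mem_univ i) ?_
          rw [if_neg]
          rw [Equiv.Perm.mul_apply, ← hi]
          intro hcon
          exact hzz (σ.injective hcon).symm
        rw [this, zero_mul]
      · have : (∏ j' : Fin (1 * k),
            if σ (Fin.cast h (Fin.natAdd (1 * m) j')) =
                (σ * ρ) (Fin.cast h (Fin.natAdd (1 * m) j')) then
              lam (σ (Fin.cast h (Fin.natAdd (1 * m) j'))) else 0) = 0 := by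
          refine Finset.prod_eq_zero (Finset.mem_univ j) ?_
          rw [if_neg]
          rw [Equiv.Perm.mul_apply, ← hj]
          intro hcon
          exact hzz (σ.injective hcon).symm
        rw [this, mul_zero]
    rw [hzero, mul_zero]
  · intro hne
    exact absurd (Finset.mem_univ 1) hne
end RhoStep

set_option maxHeartbeats 1000000 in
/-- for a symmetric bilinear form `B` with eigenvalues `λ₁,…,λ_n`,
`(1/(k!(n−k)!))·⋆(g^{n−k}·B^k)` is the `k`-th elementary symmetric function
`e_k(λ₁,…,λ_n)`. -/
theorem gaussBonnet_stmt8 {V : Type*} [NormedAddCommGroup V] [InnerProductSpace ℝ V]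
    {n k : ℕ} (hk : k ≤ n) (b : OrthonormalBasis (Fin n) ℝ V)
    (B : V →ₗ[ℝ] V →ₗ[ℝ] ℝ) (hB : ∀ u v, B u v = B v u) (lam : Fin n → ℝ)
    (hdiag : ∀ i j, B (b i) (b j) = if i = j then lam i else 0) :
    (1 / (k.factorial * (n - k).factorial : ℝ)) *
        starScalar b (castD (by omega) (by omega)
          (dmul (dpow (gmetric (V := V)) (n - k)) (dpow (bilinD B) k)))
      = ∑ t ∈ Finset.univ.powersetCard k, ∏ i ∈ t, lam i := by
  
  classical
  have hnk : 1 * (n - k) + 1 * k = n := by omega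
  rw [starScalar_eq]
  simp only [castD]
  have h1 : ∑ σ : Equiv.Perm (Fin n), ∑ τ : Equiv.Perm (Fin n),
      sgn σ * sgn τ * (dmul (dpow (gmetric (V := V)) (n - k)) (dpow (bilinD B) k)
        (fun i => b (σ (Fin.cast hnk i))) (fun j => b (τ (Fin.cast hnk j))))
      = (1 / ((1 * (n - k)).factorial * (1 * k).factorial * (1 * (n - k)).factorial *
            (1 * k).factorial : ℝ)) *
        ∑ σ : Equiv.Perm (Fin n), ∑ τ : Equiv.Perm (Fin n),
          ∑ g : Gtype (n - k) k, ∑ g' : Gtype (n - k) k,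
            wfun g * wfun g' *
              (sgn σ * sgn τ * Hfun lam hnk (σ * Efun hnk g) (τ * Efun hnk g')) := by
    have hpt : ∑ σ : Equiv.Perm (Fin n), ∑ τ : Equiv.Perm (Fin n),
        sgn σ * sgn τ * (dmul (dpow (gmetric (V := V)) (n - k)) (dpow (bilinD B) k)
          (fun i => b (σ (Fin.cast hnk i))) (fun j => b (τ (Fin.cast hnk j))))
        = ∑ σ : Equiv.Perm (Fin n), ∑ τ : Equiv.Perm (Fin n),
            (1 / ((1 * (n - k)).factorial * (1 * k).factorial * (1 * (n - k)).factorial *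
              (1 * k).factorial : ℝ)) *
            ∑ g : Gtype (n - k) k, ∑ g' : Gtype (n - k) k,
              wfun g * wfun g' *
                (sgn σ * sgn τ * Hfun lam hnk (σ * Efun hnk g) (τ * Efun hnk g')) :=
      Finset.sum_congr rfl fun σ _ => Finset.sum_congr rfl fun τ _ =>
        master b B lam hdiag hnk σ τ
    rw [hpt]
    simp only [Finset.mul_sum]
  have h2 : ∑ σ : Equiv.Perm (Fin n), ∑ τ : Equiv.Perm (Fin n),
      sgn σ * sgn τ * (dmul (dpow (gmetric (V := V)) (n - k)) (dpow (bilinD B) k)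
        (fun i => b (σ (Fin.cast hnk i))) (fun j => b (τ (Fin.cast hnk j))))
      = ∑ σ : Equiv.Perm (Fin n), ∑ τ : Equiv.Perm (Fin n),
          sgn σ * sgn τ * (dmul (dpow (gmetric (V := V)) (n - k)) (dpow (bilinD B) k)
            (fun i => b (σ (Fin.cast hnk i))) (fun j => b (τ (Fin.cast hnk j)))) := rfl
  have hCval : ((1 / ((n.factorial : ℝ) * n.factorial)) *
      (1 / ((1 * (n - k)).factorial * (1 * k).factorial * (1 * (n - k)).factorial *
        (1 * k).factorial : ℝ))) *
      ((Fintype.card (Gtype (n - k) k) : ℝ) * (Fintype.card (Gtype (n - k) k) : ℝ)) = 1 := by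
    rw [card_Gtype, hnk]
    have h1 : ((n.factorial : ℝ)) ≠ 0 := by positivity
    have h2 : (((1 * (n - k)).factorial : ℝ)) ≠ 0 := by positivity
    have h3 : (((1 * k).factorial : ℝ)) ≠ 0 := by positivity
    push_cast
    field_simp
  calc (1 / (k.factorial * (n - k).factorial : ℝ)) *
        ((1 / ((n.factorial : ℝ) * n.factorial)) *
          ∑ σ : Equiv.Perm (Fin n), ∑ τ : Equiv.Perm (Fin n),
            sgn σ * sgn τ * (dmul (dpow (gmetric (V := V)) (n - k)) (dpow (bilinD B) k)
              (fun i => b (σ (Fin.cast hnk i))) (fun j => b (τ (Fin.cast hnk j)))))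
      = (1 / (k.factorial * (n - k).factorial : ℝ)) *
        (((1 / ((n.factorial : ℝ) * n.factorial)) *
          (1 / ((1 * (n - k)).factorial * (1 * k).factorial * (1 * (n - k)).factorial *
            (1 * k).factorial : ℝ))) *
          ∑ σ : Equiv.Perm (Fin n), ∑ τ : Equiv.Perm (Fin n),
            ∑ g : Gtype (n - k) k, ∑ g' : Gtype (n - k) k,
              wfun g * wfun g' *
                (sgn σ * sgn τ * Hfun lam hnk (σ * Efun hnk g) (τ * Efun hnk g'))) := by
        rw [h1]
        ring
    _ = (1 / (k.factorial * (n - k).factorial : ℝ)) *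
        ∑ σ : Equiv.Perm (Fin n), ∑ τ : Equiv.Perm (Fin n),
          sgn σ * sgn τ * Hfun lam hnk σ τ := by
        rw [grind _ (Efun hnk) wfun (sgn_Efun hnk) (Hfun lam hnk) hCval]
    _ = (1 / (k.factorial * (n - k).factorial : ℝ)) *
        ∑ σ : Equiv.Perm (Fin n), ∏ j : Fin (1 * k),
          lam (σ (Fin.cast hnk (Fin.natAdd (1 * (n - k)) j))) := by
        rw [rho_step lam hnk]
    _ = ∑ t ∈ Finset.univ.powersetCard k, ∏ i ∈ t, lam i := by
        have hcinj : Function.Injective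
            (fun j : Fin (1 * k) => Fin.cast hnk (Fin.natAdd (1 * (n - k)) j)) := by
          intro a c hac
          have := congrArg Fin.val hac
          simp only [Fin.coe_cast, Fin.coe_natAdd] at this
          exact Fin.ext (by omega)
        rw [perm_prod_count lam _ hcinj (by omega)]
        have e1 : ((1 * k).factorial : ℝ) = (k.factorial : ℝ) := by norm_num
        have e2 : ((n - 1 * k).factorial : ℝ) = ((n - k).factorial : ℝ) := by norm_num
        have e3 : (Finset.univ.powersetCard (1 * k) : Finset (Finset (Fin n)))
            = Finset.univ.powersetCard k := by norm_num
        rw [e1, e2, e3, ← mul_assoc]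
        have h1 : ((k.factorial : ℝ)) ≠ 0 := by positivity
        have h2 : (((n - k).factorial : ℝ)) ≠ 0 := by positivity
        rw [show (1 / (k.factorial * (n - k).factorial : ℝ)) *
          ((k.factorial : ℝ) * ((n - k).factorial : ℝ)) = 1 by field_simp, one_mul]
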